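/- For each n ≥ 4, the number of connected spanning subgraphs of the level-n Schreier graph B_n of the Basilica group is: for n odd, 2^{2^{n−1}} (1 + 2^{(n−1)/2})^4 (1 + 2^{(n+1)/2}) · Π_{i=1}^{(n−1)/2 − 1} (1 + 2^i)^{3·2^{n−2i−1}}; for n even, 2^{2^{n−1}} (1 + 2^{n/2})^3 · Π_{i=1}^{n/2 − 1} (1 + 2^i)^{3·2^{n−2i−1}}. Moreover, the counts for n = 1, 2, 3 are 2^2·3, 2^2·3^3, and 2^4·3^4·5, respectively. -/

import Mathlib

/-- A finite multigraph on a vertex set `V`: a finite edge type together with an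
incidence map assigning to each edge its unordered pair of endpoints
(loops and parallel edges are allowed). -/
structure Multigraph (V : Type) where
  /-- the type of edges -/
  Edge : Type
  /-- the edge type is finite -/
  fintypeEdge : Fintype Edge
  /-- equality of edges is decidable -/
  decEqEdge : DecidableEq Edge
  /-- the unordered pair of endpoints of an edge -/
  inc : Edge → Sym2 V

attribute [instance] Multigraph.fintypeEdge Multigraph.decEqEdge

namespace Multigraph

variable {V : Type} [Fintype V] [DecidableEq V]

/-- The simple graph underlying the spanning subgraph of `G` with edge set `A`:
two distinct vertices are adjacent iff some edge in `A` has them as endpoints. -/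
def toSimple (G : Multigraph V) (A : Finset G.Edge) : SimpleGraph V :=
  SimpleGraph.fromRel fun u v => ∃ e ∈ A, G.inc e = s(u, v)

/-- `G.comps A` is the number `k(A)` of connected components of the spanning
subgraph of `G` with edge set `A`. -/
noncomputable def comps (G : Multigraph V) (A : Finset G.Edge) : ℕ :=
  Nat.card (G.toSimple A).ConnectedComponent

/-- The rank `r(A) = |V| - k(A)` of the spanning subgraph with edge set `A`. -/
noncomputable def rk (G : Multigraph V) (A : Finset G.Edge) : ℕ :=
  Fintype.card V - G.comps A

/-- The nullity `n(A) = |E(A)| - r(A)` of the spanning subgraph with edge set `A`. -/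
noncomputable def nullity (G : Multigraph V) (A : Finset G.Edge) : ℕ :=
  A.card - G.rk A

/-- The Tutte polynomial
`T(G; x, y) = ∑_{A ⊆ E} (x - 1) ^ (r(E) - r(A)) * (y - 1) ^ n(A)`,
as a function of two real variables. -/
noncomputable def tutte (G : Multigraph V) (x y : ℝ) : ℝ :=
  ∑ A ∈ (Finset.univ : Finset G.Edge).powerset,
    (x - 1) ^ (G.rk Finset.univ - G.rk A) * (y - 1) ^ (G.nullity A)

/-- The reliability polynomial `R(G, p)`: the probability that, when each edge is
independently active with probability `p`, every pair of vertices is joined by a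
path of active edges (i.e. the spanning subgraph of active edges is connected). -/
noncomputable def reliability (G : Multigraph V) (p : ℝ) : ℝ :=
  ∑ A ∈ (Finset.univ : Finset G.Edge).powerset,
    if G.comps A = 1 then p ^ A.card * (1 - p) ^ (Fintype.card G.Edge - A.card) else 0

/-- The complexity `τ(G)`: the number of spanning subtrees of `G`, i.e. spanning
subgraphs which are connected and have `|V| - 1` edges. -/
noncomputable def treeCount (G : Multigraph V) : ℕ :=
  Nat.card {A : Finset G.Edge // G.comps A = 1 ∧ A.card + 1 = Fintype.card V}

/-- The number of connected spanning subgraphs of `G`. -/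
noncomputable def connCount (G : Multigraph V) : ℕ :=
  Nat.card {A : Finset G.Edge // G.comps A = 1}

/-- The number of spanning forests of `G`: spanning subgraphs containing no cycle,
i.e. with `|E(A)| = |V| - k(A)` (zero nullity). -/
noncomputable def forestCount (G : Multigraph V) : ℕ :=
  Nat.card {A : Finset G.Edge // A.card + G.comps A = Fintype.card V}

/-- `σ` is an orientation of `G` if it assigns to every edge an ordered pair of
vertices whose underlying unordered pair is the pair of endpoints of the edge. -/
def IsOrientation (G : Multigraph V) (σ : G.Edge → V × V) : Prop :=
  ∀ e, s((σ e).1, (σ e).2) = G.inc e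

/-- The number of acyclic orientations of `G`: orientations admitting no directed
cycle. -/
noncomputable def acyclicOrientationCount (G : Multigraph V) : ℕ :=
  Nat.card {σ : G.Edge → V × V //
    G.IsOrientation σ ∧ ∀ v : V, ¬ Relation.TransGen (fun u w => ∃ e, σ e = (u, w)) v v}

/-- A proper coloring of `G`: the two endpoints of every edge receive distinct
colors. -/
def ProperColoring (G : Multigraph V) {α : Type} (c : V → α) : Prop :=
  ∀ e, ¬ (Sym2.map c (G.inc e)).IsDiag

/-- The number of proper colorings of `G` with `k` colors (the value `χ(G, k)` of
the chromatic polynomial at the natural number `k`). -/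
noncomputable def chromCount (G : Multigraph V) (k : ℕ) : ℕ :=
  Nat.card {c : V → Fin k // G.ProperColoring c}

end Multigraph

mutual
  /-- The generator `a = e(b, id)` of the Basilica group, acting on the `n`-th
  level of the binary rooted tree: `a(1w) = 1w` and `a(0w) = 0 b(w)`. -/
  def basA : (n : ℕ) → (Fin n → Bool) → (Fin n → Bool)
    | 0, v => v
    | n + 1, v =>
      match v 0 with
      | true => v
      | false => Fin.cons false (basB n (Fin.tail v))

  /-- The generator `b = ε(a, id)` of the Basilica group, acting on the `n`-th
  level of the binary rooted tree: `b(1w) = 0w` and `b(0w) = 1 a(w)`. -/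
  def basB : (n : ℕ) → (Fin n → Bool) → (Fin n → Bool)
    | 0, v => v
    | n + 1, v =>
      match v 0 with
      | true => Fin.cons false (Fin.tail v)
      | false => Fin.cons true (basA n (Fin.tail v))
end

/-- The generator of the Basilica group indexed by a boolean tag. -/
def basGen (n : ℕ) : Bool → (Fin n → Bool) → (Fin n → Bool)
  | true => basA n
  | false => basB n

/-- The level-`n` Schreier graph `B_n` of the Basilica group: vertices are the
binary words of length `n`, and for each generator `s ∈ {a, b}` and each vertex
`v` there is one edge joining `v` and `s(v)` (a loop when `s(v) = v`). -/
def basilica (n : ℕ) : Multigraph (Fin n → Bool) where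
  Edge := Bool × (Fin n → Bool)
  fintypeEdge := inferInstance
  decEqEdge := inferInstance
  inc := fun e => s(e.2, basGen n e.1 e.2)

section Basics

open Finset

/-- basic simp lemmas for the generators -/
lemma basA_cons_true {n : ℕ} (w : Fin n → Bool) :
    basA (n+1) (Fin.cons true w) = Fin.cons true w := by
  unfold basA; simp

lemma basA_cons_false {n : ℕ} (w : Fin n → Bool) :
    basA (n+1) (Fin.cons false w) = Fin.cons false (basB n w) := by
  unfold basA; simp

lemma basB_cons_true {n : ℕ} (w : Fin n → Bool) :
    basB (n+1) (Fin.cons true w) = Fin.cons false w := by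
  unfold basB; simp

lemma basB_cons_false {n : ℕ} (w : Fin n → Bool) :
    basB (n+1) (Fin.cons false w) = Fin.cons true (basA n w) := by
  unfold basB; simp

mutual
  lemma basA_injective : ∀ n, Function.Injective (basA n)
    | 0 => fun v v' h => h
    | n+1 => by
      intro v v' h
      rw [← Fin.cons_self_tail v, ← Fin.cons_self_tail v'] at h ⊢
      rcases hv : v 0 <;> rcases hv' : v' 0 <;>
        simp only [hv, hv', basA_cons_true, basA_cons_false] at h
      · simpa [basB_injective n (by simpa [Fin.cons_inj] using h)] using h
      · exact absurd (congrFun h 0) (by simp)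
      · exact absurd (congrFun h 0) (by simp)
      · exact h
  lemma basB_injective : ∀ n, Function.Injective (basB n)
    | 0 => fun v v' h => h
    | n+1 => by
      intro v v' h
      rw [← Fin.cons_self_tail v, ← Fin.cons_self_tail v'] at h ⊢
      rcases hv : v 0 <;> rcases hv' : v' 0 <;>
        simp only [hv, hv', basB_cons_true, basB_cons_false] at h
      · simpa [basA_injective n (by simpa [Fin.cons_inj] using h)] using h
      · exact absurd (congrFun h 0) (by simp)
      · exact absurd (congrFun h 0) (by simp)
      · simpa [Fin.cons_inj] using h
end

lemma basA_surjective (n : ℕ) : Function.Surjective (basA n) :=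
  Finite.surjective_of_injective (basA_injective n)

end Basics
section Classes

mutual
  /-- index type for the cycle classes of the `a`-edges at level `n` -/
  def Ja : ℕ → Type
    | 0 => PUnit
    | n+1 => (Fin n → Bool) ⊕ Jb n
  /-- index type for the cycle classes of the `b`-edges at level `n` -/
  def Jb : ℕ → Type
    | 0 => PUnit
    | n+1 => Ja n
end

mutual
  def fintypeJa : (n : ℕ) → Fintype (Ja n)
    | 0 => inferInstanceAs (Fintype PUnit)
    | n+1 => letI := fintypeJb n; inferInstanceAs (Fintype ((Fin n → Bool) ⊕ Jb n))
  def fintypeJb : (n : ℕ) → Fintype (Jb n)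
    | 0 => inferInstanceAs (Fintype PUnit)
    | n+1 => fintypeJa n
end

attribute [instance] fintypeJa fintypeJb

mutual
  /-- the cycle class of the `a`-edge at vertex `v` -/
  def qa : (n : ℕ) → (Fin n → Bool) → Ja n
    | 0, _ => PUnit.unit
    | n+1, v =>
      match v 0 with
      | true => Sum.inl (Fin.tail v)
      | false => Sum.inr (qb n (Fin.tail v))
  /-- the cycle class of the `b`-edge at vertex `v` -/
  def qb : (n : ℕ) → (Fin n → Bool) → Jb n
    | 0, _ => PUnit.unit
    | n+1, v => qa n (Fin.tail v)
end

lemma qa_cons_true {n : ℕ} (w : Fin n → Bool) :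
    qa (n+1) (Fin.cons true w) = Sum.inl w := by
  unfold qa; simp; rfl

lemma qa_cons_false {n : ℕ} (w : Fin n → Bool) :
    qa (n+1) (Fin.cons false w) = Sum.inr (qb n w) := by
  unfold qa; simp; rfl

lemma qb_cons {n : ℕ} (x : Bool) (w : Fin n → Bool) :
    qb (n+1) (Fin.cons x w) = qa n w := by
  unfold qb; simp; rfl

mutual
  lemma qa_basA : ∀ n (v : Fin n → Bool), qa n (basA n v) = qa n v
    | 0, v => rfl
    | n+1, v => by
      rw [← Fin.cons_self_tail v]
      rcases hv : v 0
      · rw [basA_cons_false, qa_cons_false, qa_cons_false, qb_basB n _]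
      · rw [basA_cons_true]
  lemma qb_basB : ∀ n (v : Fin n → Bool), qb n (basB n v) = qb n v
    | 0, v => rfl
    | n+1, v => by
      rw [← Fin.cons_self_tail v]
      rcases hv : v 0
      · rw [basB_cons_false, qb_cons, qb_cons, qa_basA n _]
      · rw [basB_cons_true, qb_cons, qb_cons]
end

end Classes
section Counting

private lemma optcast {E J : Type} {q : E → J} (F : ∀ j : J, Option {e : E // q e = j})
    {e : E} {j : J} (h : q e = j) :
    F (q e) = some ⟨e, rfl⟩ ↔ F j = some ⟨e, h⟩ := by subst h; rfl

/-- subsets missing at most one element of each fiber of `q` correspond to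
choices, for each fiber, of the missing element (or none). -/
noncomputable def missEquiv {E J : Type} [Fintype E] [DecidableEq E] (q : E → J) :
    {A : Finset E // ∀ e f : E, e ∉ A → f ∉ A → q e = q f → e = f} ≃
      ∀ j : J, Option {e : E // q e = j} := by
  classical
  refine
  { toFun := fun A j => if h : ∃ e : {e : E // q e = j}, e.1 ∉ A.1 then some h.choose else none
    invFun := fun F => ⟨Finset.univ.filter (fun e => F (q e) ≠ some ⟨e, rfl⟩), ?_⟩
    left_inv := ?_
    right_inv := ?_ }
  · intro e f he hf hq
    simp only [Finset.mem_filter, Finset.mem_univ, true_and, not_not] at he hf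
    rw [optcast F hq] at he
    rw [he] at hf
    exact Subtype.mk_eq_mk.1 (Option.some_injective _ hf)
  · rintro ⟨A, hA⟩
    ext e
    simp only [Finset.mem_filter, Finset.mem_univ, true_and]
    by_cases he : e ∈ A
    · simp only [he, iff_true]
      intro hcon
      split at hcon
      · next h =>
        have h2 := h.choose_spec
        rw [Option.some_inj] at hcon
        rw [hcon] at h2
        exact h2 he
      · exact absurd hcon (by simp)
    · simp only [he, iff_false, not_not]
      have hex : ∃ x : {x : E // q x = q e}, x.1 ∉ A := ⟨⟨e, rfl⟩, he⟩
      rw [dif_pos hex]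
      congr 1
      exact Subtype.ext (hA _ _ hex.choose_spec he hex.choose.2)
  · intro F
    funext j
    dsimp only
    rcases hF : F j with _ | x
    · rw [dif_neg]
      rintro ⟨x, hx⟩
      simp only [Finset.mem_filter, Finset.mem_univ, true_and, not_not] at hx
      rw [optcast F x.2] at hx
      rw [hF] at hx
      exact absurd hx (by simp)
    · have hmem : x.1 ∉ Finset.univ.filter (fun e => F (q e) ≠ some ⟨e, rfl⟩) := by
        simp only [Finset.mem_filter, Finset.mem_univ, true_and, not_not]
        rw [optcast F x.2, hF]
      have hex : ∃ e : {e : E // q e = j},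
          e.1 ∉ Finset.univ.filter (fun e => F (q e) ≠ some ⟨e, rfl⟩) := ⟨x, hmem⟩
      rw [dif_pos hex]
      have h2 : F (q hex.choose.1) = some ⟨hex.choose.1, rfl⟩ := by
        by_contra hne
        exact hex.choose_spec (Finset.mem_filter.2 ⟨Finset.mem_univ _, hne⟩)
      have h3 : F j = some ⟨hex.choose.1, hex.choose.2⟩ := (optcast F hex.choose.2).mp h2
      rw [hF] at h3
      have h4 := Option.some_inj.mp h3
      exact congrArg some (Subtype.ext (congrArg Subtype.val h4).symm)

end Counting
section GraphGeneric

open SimpleGraph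

lemma toSimple_adj {V : Type} [Fintype V] [DecidableEq V]
    (G : Multigraph V) (A : Finset G.Edge) (u v : V) :
    (G.toSimple A).Adj u v ↔ u ≠ v ∧ ∃ e ∈ A, G.inc e = s(u, v) := by
  rw [Multigraph.toSimple, SimpleGraph.fromRel_adj]
  constructor
  · rintro ⟨hne, h | h⟩
    · exact ⟨hne, h⟩
    · obtain ⟨e, he, hinc⟩ := h
      exact ⟨hne, e, he, by rw [hinc, Sym2.eq_swap]⟩
  · rintro ⟨hne, h⟩
    exact ⟨hne, Or.inl h⟩

lemma comps_eq_one_iff {V : Type} [Fintype V] [DecidableEq V] [Nonempty V]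
    (G : Multigraph V) (A : Finset G.Edge) :
    G.comps A = 1 ↔ (G.toSimple A).Connected := by
  rw [Multigraph.comps, Nat.card_eq_one_iff_unique]
  constructor
  · rintro ⟨hsub, -⟩
    refine SimpleGraph.Connected.mk fun u v => ?_
    have := @Subsingleton.elim _ hsub ((G.toSimple A).connectedComponentMk u)
      ((G.toSimple A).connectedComponentMk v)
    exact (SimpleGraph.ConnectedComponent.eq).1 this
  · intro h
    refine ⟨⟨fun x y => ?_⟩, ⟨(G.toSimple A).connectedComponentMk Classical.ofNonempty⟩⟩
    obtain ⟨u, rfl⟩ := x.exists_rep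
    obtain ⟨v, rfl⟩ := y.exists_rep
    exact (SimpleGraph.ConnectedComponent.eq).2 (h.preconnected u v)

lemma reachable_map {α β : Type} (G : SimpleGraph α) (H : SimpleGraph β) (f : α → β)
    (hf : ∀ u v, G.Adj u v → H.Reachable (f u) (f v)) {u v : α} (h : G.Reachable u v) :
    H.Reachable (f u) (f v) := by
  obtain ⟨p⟩ := h
  induction p with
  | nil => exact Reachable.refl _
  | cons h p ih => exact (hf _ _ h).trans ih

lemma card_miss {E J : Type} [Fintype E] [DecidableEq E] [Fintype J] (q : E → J) :
    Nat.card {A : Finset E // ∀ e f : E, e ∉ A → f ∉ A → q e = q f → e = f} =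
      ∏ j : J, (Nat.card {e : E // q e = j} + 1) := by
  classical
  rw [Nat.card_congr (missEquiv q), Nat.card_pi]
  refine Finset.prod_congr rfl fun j _ => ?_
  rw [Nat.card_eq_fintype_card, Nat.card_eq_fintype_card, Fintype.card_option]

end GraphGeneric
section BasilicaGraph

open SimpleGraph

/-- the spanning subgraph of the basilica graph with edge set `A` -/
def Gr (n : ℕ) (A : Finset (Bool × (Fin n → Bool))) : SimpleGraph (Fin n → Bool) :=
  (basilica n).toSimple A

/-- the cycle class of an edge of the basilica graph -/
def bq (n : ℕ) (e : Bool × (Fin n → Bool)) : Ja n ⊕ Jb n :=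
  match e with
  | (true, v) => Sum.inl (qa n v)
  | (false, v) => Sum.inr (qb n v)

lemma basilica_inc (n : ℕ) (e : Bool × (Fin n → Bool)) :
    (basilica n).inc e = s(e.2, basGen n e.1 e.2) := rfl

lemma gr_adj {n : ℕ} (A : Finset (Bool × (Fin n → Bool))) (u v : Fin n → Bool) :
    (Gr n A).Adj u v ↔ u ≠ v ∧ ∃ e ∈ A, s(e.2, basGen n e.1 e.2) = s(u, v) :=
  toSimple_adj (basilica n) A u v

lemma adj_of_edge {n : ℕ} {A : Finset (Bool × (Fin n → Bool))}
    {e : Bool × (Fin n → Bool)} (he : e ∈ A) {u v : Fin n → Bool} (hne : u ≠ v)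
    (hinc : s(e.2, basGen n e.1 e.2) = s(u, v)) : (Gr n A).Adj u v :=
  (gr_adj A u v).2 ⟨hne, e, he, hinc⟩

lemma cons_ne_cons_of_head {n : ℕ} {x y : Bool} (h : x ≠ y) (w w' : Fin n → Bool) :
    (Fin.cons x w : Fin (n+1) → Bool) ≠ Fin.cons y w' := by
  intro hc
  exact h (by simpa using congrFun hc 0)

lemma adj_c1 {n : ℕ} (A : Finset (Bool × (Fin (n+1) → Bool))) (y : Fin n → Bool)
    (z : Fin (n+1) → Bool) (h : (Gr (n+1) A).Adj (Fin.cons true y) z) :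
    (z = Fin.cons false y ∧ (false, Fin.cons true y) ∈ A) ∨
      ∃ t, basA n t = y ∧ z = Fin.cons false t ∧ (false, Fin.cons false t) ∈ A := by
  rw [gr_adj] at h
  obtain ⟨hne, ⟨s, x⟩, hmem, hinc⟩ := h
  obtain ⟨xh, xt, rfl⟩ : ∃ b t, x = Fin.cons b t := ⟨x 0, Fin.tail x, (Fin.cons_self_tail x).symm⟩
  cases s <;> cases xh <;>
    simp only [basGen, basA_cons_true, basA_cons_false, basB_cons_true, basB_cons_false,
      Sym2.eq_iff, Fin.cons_inj, Bool.false_eq_true, Bool.true_eq_false, false_and,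
      true_and, false_or, or_false] at hinc
  · -- s = false, xh = false
    exact Or.inr ⟨xt, hinc.2, hinc.1.symm, hmem⟩
  · -- s = false, xh = true
    rcases hinc with ⟨h1, h2⟩ | ⟨-, h⟩
    · subst h1
      exact Or.inl ⟨h2.symm, hmem⟩
    · exact h.elim
  · -- s = true, xh = false
    exact hinc.2.elim
  · -- s = true, xh = true
    rcases hinc with ⟨h1, h2⟩ | ⟨h2, h1⟩ <;> (subst h1; exact absurd h2 hne)

lemma adj_c0 {n : ℕ} (A : Finset (Bool × (Fin (n+1) → Bool))) (w : Fin n → Bool)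
    (z : Fin (n+1) → Bool) (h : (Gr (n+1) A).Adj (Fin.cons false w) z) :
    (z = Fin.cons false (basB n w) ∧ (true, Fin.cons false w) ∈ A) ∨
      (∃ t, basB n t = w ∧ z = Fin.cons false t ∧ (true, Fin.cons false t) ∈ A) ∨
      (z = Fin.cons true (basA n w) ∧ (false, Fin.cons false w) ∈ A) ∨
      (z = Fin.cons true w ∧ (false, Fin.cons true w) ∈ A) := by
  rw [gr_adj] at h
  obtain ⟨hne, ⟨s, x⟩, hmem, hinc⟩ := h
  obtain ⟨xh, xt, rfl⟩ : ∃ b t, x = Fin.cons b t := ⟨x 0, Fin.tail x, (Fin.cons_self_tail x).symm⟩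
  cases s <;> cases xh <;>
    simp only [basGen, basA_cons_true, basA_cons_false, basB_cons_true, basB_cons_false,
      Sym2.eq_iff, Fin.cons_inj, Bool.false_eq_true, Bool.true_eq_false, false_and,
      true_and, false_or, or_false] at hinc
  · -- s = false, xh = false
    rcases hinc with ⟨h1, h2⟩ | ⟨-, h⟩
    · subst h1
      exact Or.inr (Or.inr (Or.inl ⟨h2.symm, hmem⟩))
    · exact h.elim
  · -- s = false, xh = true
    obtain ⟨h1, h2⟩ := hinc
    subst h2
    exact Or.inr (Or.inr (Or.inr ⟨h1.symm, hmem⟩))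
  · -- s = true, xh = false
    rcases hinc with ⟨h1, h2⟩ | ⟨h1, h2⟩
    · subst h1
      exact Or.inl ⟨h2.symm, hmem⟩
    · exact Or.inr (Or.inl ⟨xt, h2, h1.symm, hmem⟩)
  · -- s = true, xh = true
    exact hinc.2.elim
section Projection

open SimpleGraph

/-- the "contraction" of an edge set at level `n+1` to an edge set at level `n` -/
def projA {n : ℕ} (A : Finset (Bool × (Fin (n+1) → Bool))) : Finset (Bool × (Fin n → Bool)) :=
  Finset.univ.filter (fun e =>
    if e.1 = true then
      (false, Fin.cons false e.2) ∈ A ∧ (false, Fin.cons true (basA n e.2)) ∈ A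
    else (true, Fin.cons false e.2) ∈ A)

lemma mem_projA_true {n : ℕ} {A : Finset (Bool × (Fin (n+1) → Bool))} {w : Fin n → Bool} :
    (true, w) ∈ projA A ↔
      ((false, Fin.cons false w) ∈ A ∧ (false, Fin.cons true (basA n w)) ∈ A) := by
  simp [projA]

lemma mem_projA_false {n : ℕ} {A : Finset (Bool × (Fin (n+1) → Bool))} {w : Fin n → Bool} :
    (false, w) ∈ projA A ↔ (true, Fin.cons false w) ∈ A := by
  simp [projA]

/-- the condition that at most one edge of each cycle class is missing from `A` -/
def Cond (n : ℕ) (A : Finset (Bool × (Fin n → Bool))) : Prop :=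
  ∀ e f : Bool × (Fin n → Bool), e ∉ A → f ∉ A → bq n e = bq n f → e = f

lemma bq_true_cons_true {n : ℕ} (w : Fin n → Bool) :
    bq (n+1) (true, Fin.cons true w) = Sum.inl (Sum.inl w) := by
  show Sum.inl (qa (n+1) (Fin.cons true w)) = _
  rw [qa_cons_true]; rfl

lemma bq_true_cons_false {n : ℕ} (w : Fin n → Bool) :
    bq (n+1) (true, Fin.cons false w) = Sum.inl (Sum.inr (qb n w)) := by
  show Sum.inl (qa (n+1) (Fin.cons false w)) = _
  rw [qa_cons_false]; rfl

lemma bq_false_cons {n : ℕ} (x : Bool) (w : Fin n → Bool) :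
    bq (n+1) (false, Fin.cons x w) = Sum.inr (qa n w) := by
  show Sum.inr (qb (n+1) (Fin.cons x w)) = _
  rw [qb_cons]; rfl

lemma cond_projA {n : ℕ} {A : Finset (Bool × (Fin (n+1) → Bool))} (hA : Cond (n+1) A) :
    Cond n (projA A) := by
  rintro ⟨es, ev⟩ ⟨fs, fv⟩ he hf hq
  cases es <;> cases fs
  · -- both b-type
    rw [mem_projA_false] at he hf
    rw [show bq n (false, ev) = Sum.inr (qb n ev) from rfl,
      show bq n (false, fv) = Sum.inr (qb n fv) from rfl] at hq
    have hq' : qb n ev = qb n fv := Sum.inr_injective hq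
    have := hA _ _ he hf (by rw [bq_true_cons_false, bq_true_cons_false, hq'])
    have h2 : (Fin.cons false ev : Fin (n+1) → Bool) = Fin.cons false fv :=
      congrArg Prod.snd this
    rw [(Fin.cons_inj.mp h2).2]
  · -- mixed
    exact absurd hq (by simp [bq])
  · -- mixed
    exact absurd hq (by simp [bq])
  · -- both a-type
    rw [mem_projA_true, not_and_or] at he hf
    have hq' : qa n ev = qa n fv := by
      have : (Sum.inl (qa n ev) : Ja n ⊕ Jb n) = Sum.inl (qa n fv) := hq
      exact Sum.inl_injective this
    have key : ∀ me mf : Bool × (Fin (n+1) → Bool),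
        (me = (false, Fin.cons false ev) ∨ me = (false, Fin.cons true (basA n ev))) →
        (mf = (false, Fin.cons false fv) ∨ mf = (false, Fin.cons true (basA n fv))) →
        me ∉ A → mf ∉ A → ev = fv := by
      rintro me mf (rfl | rfl) (rfl | rfl) hmea hmfa
      · have h := hA _ _ hmea hmfa (by rw [bq_false_cons, bq_false_cons, hq'])
        rw [Prod.mk.injEq] at h
        exact (Fin.cons_inj.mp h.2).2
      · have h := hA _ _ hmea hmfa (by rw [bq_false_cons, bq_false_cons, qa_basA, hq'])
        rw [Prod.mk.injEq] at h
        exact absurd (Fin.cons_inj.mp h.2).1 (by simp)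
      · have h := hA _ _ hmea hmfa (by rw [bq_false_cons, bq_false_cons, qa_basA, hq'])
        rw [Prod.mk.injEq] at h
        exact absurd (Fin.cons_inj.mp h.2).1 (by simp)
      · have h := hA _ _ hmea hmfa (by rw [bq_false_cons, bq_false_cons, qa_basA, qa_basA, hq'])
        rw [Prod.mk.injEq] at h
        exact basA_injective n (Fin.cons_inj.mp h.2).2
    rcases he with he | he <;> rcases hf with hf | hf
    · exact congrArg _ (key _ _ (Or.inl rfl) (Or.inl rfl) he hf)
    · exact congrArg _ (key _ _ (Or.inl rfl) (Or.inr rfl) he hf)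
    · exact congrArg _ (key _ _ (Or.inr rfl) (Or.inl rfl) he hf)
    · exact congrArg _ (key _ _ (Or.inr rfl) (Or.inr rfl) he hf)

end Projection
section H1

open SimpleGraph

lemma H1 : ∀ (n : ℕ) (A : Finset (Bool × (Fin n → Bool))), Cond n A → (Gr n A).Connected
  | 0, A, _ => by
    refine SimpleGraph.Connected.mk fun u v => ?_
    rw [Subsingleton.elim u v]
  | n+1, A, hA => by
    have hA' : Cond n (projA A) := cond_projA hA
    have hconn' : (Gr n (projA A)).Connected := H1 n (projA A) hA'
    have claim1 : ∀ w w' : Fin n → Bool, (Gr n (projA A)).Adj w w' →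
        (Gr (n+1) A).Reachable (Fin.cons false w) (Fin.cons false w') := by
      intro w w' hadj
      rw [gr_adj] at hadj
      obtain ⟨hne, ⟨s, t⟩, hmem, hinc⟩ := hadj
      cases s
      · -- downstairs b-edge, upstairs horizontal a-edge
        rw [mem_projA_false] at hmem
        simp only [basGen] at hinc
        have htne : t ≠ basB n t := by
          intro h3
          apply hne
          rcases Sym2.eq_iff.mp hinc with ⟨h4, h5⟩ | ⟨h4, h5⟩ <;> rw [← h4, ← h5, ← h3]
        have hr : (Gr (n+1) A).Adj (Fin.cons false t) (Fin.cons false (basB n t)) := by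
          refine adj_of_edge hmem (fun hc => htne (Fin.cons_inj.mp hc).2) ?_
          show s(Fin.cons false t, basA (n+1) (Fin.cons false t)) = _
          rw [basA_cons_false]
        rcases Sym2.eq_iff.mp hinc with ⟨h4, h5⟩ | ⟨h4, h5⟩ <;> rw [← h4, ← h5]
        · exact hr.reachable
        · exact hr.reachable.symm
      · -- downstairs a-edge, upstairs diagonal + vertical
        rw [mem_projA_true] at hmem
        simp only [basGen] at hinc
        have h1 : (Gr (n+1) A).Adj (Fin.cons false t) (Fin.cons true (basA n t)) := by
          refine adj_of_edge hmem.1 (cons_ne_cons_of_head (by simp) _ _) ?_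
          show s(Fin.cons false t, basB (n+1) (Fin.cons false t)) = _
          rw [basB_cons_false]
        have h2 : (Gr (n+1) A).Adj (Fin.cons true (basA n t)) (Fin.cons false (basA n t)) := by
          refine adj_of_edge hmem.2 (cons_ne_cons_of_head (by simp) _ _) ?_
          show s(Fin.cons true (basA n t), basB (n+1) (Fin.cons true (basA n t))) = _
          rw [basB_cons_true]
        have main := h1.reachable.trans h2.reachable
        rcases Sym2.eq_iff.mp hinc with ⟨h4, h5⟩ | ⟨h4, h5⟩ <;> rw [← h4, ← h5]
        · exact main
        · exact main.symm
    have claim2 : ∀ w w' : Fin n → Bool, (Gr n (projA A)).Reachable w w' →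
        (Gr (n+1) A).Reachable (Fin.cons false w) (Fin.cons false w') := by
      intro w w' h
      exact reachable_map (Gr n (projA A)) (Gr (n+1) A)
        (fun w : Fin n → Bool => (Fin.cons false w : Fin (n+1) → Bool)) claim1 h
    have claim3 : ∀ w : Fin n → Bool, ∃ w',
        (Gr (n+1) A).Reachable (Fin.cons true w) (Fin.cons false w') := by
      intro w
      obtain ⟨t, ht⟩ := basA_surjective n w
      by_cases h1 : (false, Fin.cons true w) ∈ A
      · refine ⟨w, Adj.reachable (adj_of_edge h1 (cons_ne_cons_of_head (by simp) _ _) ?_)⟩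
        show s(Fin.cons true w, basB (n+1) (Fin.cons true w)) = _
        rw [basB_cons_true]
      · by_cases h2 : (false, Fin.cons false t) ∈ A
        · refine ⟨t, (Adj.reachable (adj_of_edge h2 (cons_ne_cons_of_head (by simp) _ _) ?_)).symm⟩
          show s(Fin.cons false t, basB (n+1) (Fin.cons false t)) = _
          rw [basB_cons_false, ht]
        · exfalso
          have := hA _ _ h1 h2 (by rw [bq_false_cons, bq_false_cons, ← ht, qa_basA])
          rw [Prod.mk.injEq] at this
          exact absurd (Fin.cons_inj.mp this.2).1 (by simp)
    refine SimpleGraph.Connected.mk fun u v => ?_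
    have aux : ∀ u : Fin (n+1) → Bool, ∃ w,
        (Gr (n+1) A).Reachable u (Fin.cons false w) := by
      intro u
      rcases hu : u 0
      · refine ⟨Fin.tail u, ?_⟩
        rw [show (Fin.cons false (Fin.tail u) : Fin (n+1) → Bool) = u from by
          rw [← hu]; exact Fin.cons_self_tail u]
      · obtain ⟨w', hw'⟩ := claim3 (Fin.tail u)
        rw [show (Fin.cons true (Fin.tail u) : Fin (n+1) → Bool) = u from by
          rw [← hu]; exact Fin.cons_self_tail u] at hw'
        exact ⟨w', hw'⟩
    obtain ⟨w, hw⟩ := aux u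
    obtain ⟨w', hw'⟩ := aux v
    exact hw.trans ((claim2 w w' (hconn'.preconnected w w')).trans hw'.symm)

end H1
section WalkProj

open SimpleGraph

lemma walk_proj {n : ℕ} (A : Finset (Bool × (Fin (n+1) → Bool))) :
    ∀ (L : ℕ) ⦃u v : Fin (n+1) → Bool⦄ (p : (Gr (n+1) A).Walk u v), p.length ≤ L →
      ∀ w w', u = Fin.cons false w → v = Fin.cons false w' →
      (Gr n (projA A)).Reachable w w' := by
  intro L
  induction L with
  | zero =>
    intro u v p hp w w' hu hv
    cases p with
    | nil =>
      rw [(Fin.cons_inj.mp (hu.symm.trans hv)).2]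
    | cons h q => simp [SimpleGraph.Walk.length_cons] at hp
  | succ L IH =>
    intro u v p hp w w' hu hv
    cases p with
    | nil =>
      rw [(Fin.cons_inj.mp (hu.symm.trans hv)).2]
    | cons h q =>
      rename_i z
      subst hu
      have hqlen : q.length ≤ L := by
        simp only [SimpleGraph.Walk.length_cons] at hp; omega
      rcases adj_c0 A w z h with ⟨hz, hmem⟩ | ⟨t, hbt, hz, hmem⟩ | ⟨hz, hmem⟩ | ⟨hz, hmem⟩
      · -- horizontal a-edge upstairs
        subst hz
        have hq := IH q hqlen (basB n w) w' rfl hv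
        by_cases hww : w = basB n w
        · rw [hww]; exact hq
        · exact ((adj_of_edge (mem_projA_false.2 hmem) hww
            (show s(w, basB n w) = s(w, basB n w) from rfl)).reachable).trans hq
      · -- incoming horizontal a-edge upstairs
        subst hz
        have hq := IH q hqlen t w' rfl hv
        by_cases htw : t = w
        · rw [← htw]; exact hq
        · refine ((adj_of_edge (mem_projA_false.2 hmem) htw ?_).symm.reachable).trans hq
          show s(t, basB n t) = s(t, w)
          rw [hbt]
      · -- diagonal b-edge to the 1-copy
        subst hz
        cases q with
        | nil => exact absurd (congrFun hv 0) (by simp)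
        | cons h2 q2 =>
          rename_i z2
          have hq2len : q2.length ≤ L := by
            simp only [SimpleGraph.Walk.length_cons] at hp; omega
          rcases adj_c1 A (basA n w) z2 h2 with ⟨hz2, hmem2⟩ | ⟨t2, ht2, hz2, hmem2⟩
          · subst hz2
            have hq := IH q2 hq2len (basA n w) w' rfl hv
            by_cases hww : w = basA n w
            · rw [hww]; exact hq
            · refine ((adj_of_edge (mem_projA_true.2 ⟨hmem, hmem2⟩) hww ?_).reachable).trans hq
              show s(w, basA n w) = s(w, basA n w)
              rfl
          · subst hz2
            have hr := IH q2 hq2len t2 w' rfl hv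
            rw [basA_injective n ht2] at hr
            exact hr
      · -- vertical b-edge to the 1-copy
        subst hz
        cases q with
        | nil => exact absurd (congrFun hv 0) (by simp)
        | cons h2 q2 =>
          rename_i z2
          have hq2len : q2.length ≤ L := by
            simp only [SimpleGraph.Walk.length_cons] at hp; omega
          rcases adj_c1 A w z2 h2 with ⟨hz2, hmem2⟩ | ⟨t2, ht2, hz2, hmem2⟩
          · subst hz2
            exact IH q2 hq2len w w' rfl hv
          · subst hz2
            have hq := IH q2 hq2len t2 w' rfl hv
            by_cases ht2w : t2 = w
            · rw [← ht2w]; exact hq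
            · refine ((adj_of_edge (mem_projA_true.2 ⟨hmem2, by rw [ht2]; exact hmem⟩)
                ht2w ?_).symm.reachable).trans hq
              show s(t2, basA n t2) = s(t2, w)
              rw [ht2]

lemma connected_projA {n : ℕ} {A : Finset (Bool × (Fin (n+1) → Bool))}
    (h : (Gr (n+1) A).Connected) : (Gr n (projA A)).Connected := by
  refine SimpleGraph.Connected.mk fun w w' => ?_
  obtain ⟨p⟩ := h.preconnected (Fin.cons false w) (Fin.cons false w')
  exact walk_proj A p.length p le_rfl w w' rfl rfl

end WalkProj
section H2

open SimpleGraph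

lemma isolated_c1 {n : ℕ} {A : Finset (Bool × (Fin (n+1) → Bool))} {t : Fin n → Bool}
    (h1 : (false, Fin.cons true (basA n t)) ∉ A) (h2 : (false, Fin.cons false t) ∉ A) :
    ¬ (Gr (n+1) A).Connected := by
  intro hc
  obtain ⟨p⟩ := hc.preconnected (Fin.cons true (basA n t)) (Fin.cons false t)
  have key : ∀ (u v : Fin (n+1) → Bool), (Gr (n+1) A).Walk u v →
      u = Fin.cons true (basA n t) → v = Fin.cons false t → False := by
    intro u v p
    cases p with
    | nil =>
      intro hu hv
      exact absurd (congrFun (hu.symm.trans hv) 0) (by simp)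
    | cons h q =>
      intro hu hv
      subst hu
      rcases adj_c1 A (basA n t) _ h with ⟨-, hmem⟩ | ⟨t2, ht2, -, hmem⟩
      · exact h1 hmem
      · rw [basA_injective n ht2] at hmem
        exact h2 hmem
  exact key _ _ p rfl rfl

lemma H2 : ∀ (n : ℕ) (A : Finset (Bool × (Fin n → Bool))), (Gr n A).Connected → Cond n A
  | 0, A, _ => by
    rintro ⟨es, ev⟩ ⟨fs, fv⟩ he hf hq
    cases es <;> cases fs
    · rw [Subsingleton.elim ev fv]
    · exact absurd hq (by simp [bq])
    · exact absurd hq (by simp [bq])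
    · rw [Subsingleton.elim ev fv]
  | n+1, A, hconn => by
    have hCondP : Cond n (projA A) := H2 n (projA A) (connected_projA hconn)
    rintro ⟨es, ev⟩ ⟨fs, fv⟩ he hf hq
    obtain ⟨evh, evt, rfl⟩ : ∃ b t, ev = Fin.cons b t :=
      ⟨ev 0, Fin.tail ev, (Fin.cons_self_tail ev).symm⟩
    obtain ⟨fvh, fvt, rfl⟩ : ∃ b t, fv = Fin.cons b t :=
      ⟨fv 0, Fin.tail fv, (Fin.cons_self_tail fv).symm⟩
    cases es <;> cases fs
    · -- both b-edges
      rw [bq_false_cons, bq_false_cons] at hq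
      have hq' : qa n evt = qa n fvt := Sum.inr_injective hq
      cases evh <;> cases fvh
      · -- two diagonals
        have h1 : (true, evt) ∉ projA A := fun hc => he (mem_projA_true.1 hc).1
        have h2 : (true, fvt) ∉ projA A := fun hc => hf (mem_projA_true.1 hc).1
        have := hCondP _ _ h1 h2 (by
          show Sum.inl (qa n evt) = Sum.inl (qa n fvt); rw [hq'])
        rw [Prod.mk.injEq] at this
        rw [this.2]
      · -- e diagonal, f vertical
        obtain ⟨tf, htf⟩ := basA_surjective n fvt
        by_cases hte : tf = evt
        · -- isolated vertex: contradiction with connectedness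
          exact absurd hconn (isolated_c1 (by rw [htf]; exact hf) (by rw [hte]; exact he))
        · exfalso
          have h1 : (true, evt) ∉ projA A := fun hc => he (mem_projA_true.1 hc).1
          have h2 : (true, tf) ∉ projA A := fun hc => hf (by
            have := (mem_projA_true.1 hc).2
            rw [htf] at this
            exact this)
          have := hCondP _ _ h1 h2 (by
            show Sum.inl (qa n evt) = Sum.inl (qa n tf)
            rw [hq', ← htf, qa_basA])
          rw [Prod.mk.injEq] at this
          exact hte this.2.symm
      · -- e vertical, f diagonal
        obtain ⟨te, hte⟩ := basA_surjective n evt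
        by_cases htf : te = fvt
        · exact absurd hconn (isolated_c1 (by rw [hte]; exact he) (by rw [htf]; exact hf))
        · exfalso
          have h1 : (true, te) ∉ projA A := fun hc => he (by
            have := (mem_projA_true.1 hc).2
            rw [hte] at this
            exact this)
          have h2 : (true, fvt) ∉ projA A := fun hc => hf (mem_projA_true.1 hc).1
          have := hCondP _ _ h1 h2 (by
            show Sum.inl (qa n te) = Sum.inl (qa n fvt)
            rw [← hq', ← hte, qa_basA])
          rw [Prod.mk.injEq] at this
          exact htf this.2
      · -- two verticals
        obtain ⟨te, hte⟩ := basA_surjective n evt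
        obtain ⟨tf, htf⟩ := basA_surjective n fvt
        have h1 : (true, te) ∉ projA A := fun hc => he (by
          have := (mem_projA_true.1 hc).2
          rw [hte] at this
          exact this)
        have h2 : (true, tf) ∉ projA A := fun hc => hf (by
          have := (mem_projA_true.1 hc).2
          rw [htf] at this
          exact this)
        have := hCondP _ _ h1 h2 (by
          show Sum.inl (qa n te) = Sum.inl (qa n tf)
          have he2 : qa n te = qa n evt := by rw [← hte, qa_basA]
          have hf2 : qa n tf = qa n fvt := by rw [← htf, qa_basA]
          rw [he2, hf2, hq'])
        rw [Prod.mk.injEq] at this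
        rw [show evt = fvt from by rw [← hte, ← htf, this.2]]
    · exact absurd hq (by simp [bq])
    · exact absurd hq (by simp [bq])
    · -- both a-edges
      cases evh <;> cases fvh
      · -- both non-loop a-edges
        rw [bq_true_cons_false, bq_true_cons_false] at hq
        have hq' : qb n evt = qb n fvt := by
          have := Sum.inl_injective hq
          exact Sum.inr_injective this
        have h1 : (false, evt) ∉ projA A := fun hc => he (mem_projA_false.1 hc)
        have h2 : (false, fvt) ∉ projA A := fun hc => hf (mem_projA_false.1 hc)
        have := hCondP _ _ h1 h2 (by
          show Sum.inr (qb n evt) = Sum.inr (qb n fvt); rw [hq'])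
        rw [Prod.mk.injEq] at this
        rw [this.2]
      · rw [bq_true_cons_false, bq_true_cons_true] at hq
        exact absurd (Sum.inl_injective hq) (by simp)
      · rw [bq_true_cons_true, bq_true_cons_false] at hq
        exact absurd (Sum.inl_injective hq) (by simp)
      · -- two loops
        rw [bq_true_cons_true, bq_true_cons_true] at hq
        rw [Sum.inl_injective (Sum.inl_injective hq)]

end H2
section Count

open Finset

lemma comps_iff_cond (n : ℕ) (A : Finset (Bool × (Fin n → Bool))) :
    (basilica n).comps A = 1 ↔ Cond n A := by
  erw [comps_eq_one_iff]
  exact ⟨fun h => H2 n A h, fun h => H1 n A h⟩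

lemma connCount_eq (n : ℕ) :
    (basilica n).connCount =
      ∏ j : Ja n ⊕ Jb n, (Nat.card {e : Bool × (Fin n → Bool) // bq n e = j} + 1) := by
  exact (Nat.card_congr (Equiv.subtypeEquivRight (comps_iff_cond n))).trans
    (card_miss (bq n))

lemma card_fiber_inl (n : ℕ) (j : Ja n) :
    Nat.card {e : Bool × (Fin n → Bool) // bq n e = Sum.inl j} =
      Nat.card {v : Fin n → Bool // qa n v = j} := by
  refine Nat.card_congr (Equiv.symm (Equiv.ofBijective
    (fun v => ⟨(true, v.1), by show Sum.inl (qa n v.1) = _; rw [v.2]⟩) ⟨?_, ?_⟩))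
  · rintro ⟨v, hv⟩ ⟨v', hv'⟩ h
    exact Subtype.ext (congrArg (fun e => e.1.2) h)
  · rintro ⟨⟨s, v⟩, he⟩
    cases s
    · exact absurd he (by simp [bq])
    · exact ⟨⟨v, Sum.inl_injective he⟩, rfl⟩

lemma card_fiber_inr (n : ℕ) (j : Jb n) :
    Nat.card {e : Bool × (Fin n → Bool) // bq n e = Sum.inr j} =
      Nat.card {v : Fin n → Bool // qb n v = j} := by
  refine Nat.card_congr (Equiv.symm (Equiv.ofBijective
    (fun v => ⟨(false, v.1), by show Sum.inr (qb n v.1) = _; rw [v.2]⟩) ⟨?_, ?_⟩))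
  · rintro ⟨v, hv⟩ ⟨v', hv'⟩ h
    exact Subtype.ext (congrArg (fun e => e.1.2) h)
  · rintro ⟨⟨s, v⟩, he⟩
    cases s
    · exact ⟨⟨v, Sum.inr_injective he⟩, rfl⟩
    · exact absurd he (by simp [bq])

/-- the `a`-side product at level `n`, with sizes weighted by `2^k` -/
noncomputable def Fa (k n : ℕ) : ℕ :=
  ∏ j : Ja n, (1 + 2^k * Nat.card {v : Fin n → Bool // qa n v = j})

/-- the `b`-side product at level `n`, with sizes weighted by `2^k` -/
noncomputable def Fb (k n : ℕ) : ℕ :=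
  ∏ j : Jb n, (1 + 2^k * Nat.card {v : Fin n → Bool // qb n v = j})

lemma connCount_eq_F (n : ℕ) : (basilica n).connCount = Fa 0 n * Fb 0 n := by
  rw [connCount_eq, Fintype.prod_sum_type, Fa, Fb]
  congr 1
  · refine Finset.prod_congr rfl fun j _ => ?_
    rw [card_fiber_inl]
    ring
  · refine Finset.prod_congr rfl fun j _ => ?_
    rw [card_fiber_inr]
    ring

lemma Fa_zero (k : ℕ) : Fa k 0 = 1 + 2^k := by
  rw [Fa]
  rw [show (Finset.univ : Finset (Ja 0)) = {PUnit.unit} from rfl]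
  erw [Finset.prod_singleton]
  have : Nat.card {v : Fin 0 → Bool // qa 0 v = PUnit.unit} = 1 := by
    rw [Nat.card_eq_one_iff_unique]
    exact ⟨⟨fun a b => Subtype.ext (Subsingleton.elim _ _)⟩, ⟨⟨fun _ => false, rfl⟩⟩⟩
  rw [this, mul_one]

lemma Fb_zero (k : ℕ) : Fb k 0 = 1 + 2^k := by
  rw [Fb]
  rw [show (Finset.univ : Finset (Jb 0)) = {PUnit.unit} from rfl]
  erw [Finset.prod_singleton]
  have : Nat.card {v : Fin 0 → Bool // qb 0 v = PUnit.unit} = 1 := by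
    rw [Nat.card_eq_one_iff_unique]
    exact ⟨⟨fun a b => Subtype.ext (Subsingleton.elim _ _)⟩, ⟨⟨fun _ => false, rfl⟩⟩⟩
  rw [this, mul_one]

lemma qa_eq_inl_iff {n : ℕ} {v : Fin (n+1) → Bool} {w : Fin n → Bool} :
    qa (n+1) v = Sum.inl w ↔ v = Fin.cons true w := by
  constructor
  · intro h
    rw [← Fin.cons_self_tail v] at h
    rcases h0 : v 0
    · rw [h0] at h
      rw [qa_cons_false] at h
      exact absurd h (by simp)
    · rw [h0] at h
      rw [qa_cons_true] at h
      rw [← Fin.cons_self_tail v, h0, Sum.inl_injective h]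
  · rintro rfl
    rw [qa_cons_true]

lemma qa_eq_inr_iff {n : ℕ} {v : Fin (n+1) → Bool} {j : Jb n} :
    qa (n+1) v = Sum.inr j ↔ (v 0 = false ∧ qb n (Fin.tail v) = j) := by
  constructor
  · intro h
    rw [← Fin.cons_self_tail v] at h
    rcases h0 : v 0
    · rw [h0] at h
      rw [qa_cons_false] at h
      exact ⟨rfl, Sum.inr_injective h⟩
    · rw [h0] at h
      rw [qa_cons_true] at h
      exact absurd h (by simp)
  · rintro ⟨h0, h⟩
    rw [← Fin.cons_self_tail v, h0, qa_cons_false, h]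

lemma Fa_succ (k n : ℕ) : Fa k (n+1) = (1 + 2^k)^(2^n) * Fb k n := by
  rw [Fa, Fb]
  rw [show (∏ j : Ja (n+1), (1 + 2^k * Nat.card {v : Fin (n+1) → Bool // qa (n+1) v = j})) =
    ∏ j : (Fin n → Bool) ⊕ Jb n,
      (1 + 2^k * Nat.card {v : Fin (n+1) → Bool // qa (n+1) v = j}) from rfl]
  rw [Fintype.prod_sum_type]
  congr 1
  · have hcard : ∀ w : Fin n → Bool,
        Nat.card {v : Fin (n+1) → Bool // qa (n+1) v = Sum.inl w} = 1 := by
      intro w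
      rw [Nat.card_congr (Equiv.subtypeEquivRight fun v => qa_eq_inl_iff),
        Nat.card_eq_one_iff_unique]
      exact ⟨⟨fun a b => Subtype.ext (a.2.trans b.2.symm)⟩, ⟨⟨Fin.cons true w, rfl⟩⟩⟩
    calc ∏ w : Fin n → Bool,
          (1 + 2^k * Nat.card {v : Fin (n+1) → Bool // qa (n+1) v = Sum.inl w})
        = ∏ _w : Fin n → Bool, (1 + 2^k) := by
          refine Finset.prod_congr rfl fun w _ => ?_
          rw [hcard w, mul_one]
      _ = (1 + 2^k)^(2^n) := by
          rw [Finset.prod_const, Finset.card_univ, Fintype.card_fun]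
          simp
  · refine Finset.prod_congr rfl fun j _ => ?_
    congr 2
    refine Nat.card_congr ((Equiv.subtypeEquivRight fun v => qa_eq_inr_iff).trans ?_)
    refine
      { toFun := fun v => ⟨Fin.tail v.1, v.2.2⟩
        invFun := fun t => ⟨Fin.cons false t.1,
          ⟨Fin.cons_zero _ _, by rw [Fin.tail_cons]; exact t.2⟩⟩
        left_inv := ?_
        right_inv := ?_ }
    · rintro ⟨v, hv⟩
      refine Subtype.ext ?_
      show (Fin.cons false (Fin.tail v) : Fin (n+1) → Bool) = v
      rw [← hv.1]
      exact Fin.cons_self_tail v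
    · rintro ⟨t, ht⟩
      apply Subtype.ext
      simp

lemma Fb_succ (k n : ℕ) : Fb k (n+1) = Fa (k+1) n := by
  rw [Fa, Fb]
  rw [show (∏ j : Jb (n+1), (1 + 2^k * Nat.card {v : Fin (n+1) → Bool // qb (n+1) v = j})) =
    ∏ j : Ja n, (1 + 2^k * Nat.card {v : Fin (n+1) → Bool // qb (n+1) v = j}) from rfl]
  refine Finset.prod_congr rfl fun j _ => ?_
  have hqb : ∀ v : Fin (n+1) → Bool, qb (n+1) v = qa n (Fin.tail v) := by
    intro v
    rw [← Fin.cons_self_tail v, qb_cons, Fin.tail_cons]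
  have he : {v : Fin (n+1) → Bool // qb (n+1) v = j} ≃
      Bool × {t : Fin n → Bool // qa n t = j} :=
    (Equiv.subtypeEquivRight fun v => by rw [hqb v]).trans
    { toFun := fun v => (v.1 0, ⟨Fin.tail v.1, v.2⟩)
      invFun := fun x => ⟨Fin.cons x.1 x.2.1, by rw [Fin.tail_cons]; exact x.2.2⟩
      left_inv := by
        rintro ⟨v, hv⟩
        exact Subtype.ext (Fin.cons_self_tail v)
      right_inv := by
        rintro ⟨x, t, ht⟩
        refine Prod.ext ?_ ?_
        · simp
        · apply Subtype.ext
          simp }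
  rw [Nat.card_congr he, Nat.card_prod, Nat.card_eq_fintype_card (α := Bool),
    Fintype.card_bool]
  ring

end Count
section Arith

open Finset

lemma prod_shift (m : ℕ) (h : 1 ≤ m) (f : ℕ → ℕ) :
    ∏ i ∈ Finset.Icc 1 (m-1), f (i+1) = ∏ i ∈ Finset.Icc 2 m, f i := by
  conv_rhs => rw [show (2:ℕ) = 1+1 from rfl, show m = (m-1)+1 from by omega,
    ← Finset.map_add_right_Icc, Finset.prod_map]
  simp [addRightEmbedding_apply]

lemma prod_split (m : ℕ) (h : 1 ≤ m) (f : ℕ → ℕ) :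
    ∏ i ∈ Finset.Icc 1 m, f i = f 1 * ∏ i ∈ Finset.Icc 2 m, f i := by
  rw [show Finset.Icc 2 m = (Finset.Icc 1 m).erase 1 from by
    ext j; simp only [Finset.mem_Icc, Finset.mem_erase]; omega,
    Finset.mul_prod_erase _ f (Finset.mem_Icc.mpr ⟨le_refl 1, h⟩)]

lemma C_rec (k n : ℕ) : Fa k (n+2) * Fb k (n+2) =
    (1+2^k)^(2^(n+1)) * (1+2^(k+1))^(2^n) * (Fa (k+1) n * Fb (k+1) n) := by
  rw [Fa_succ k (n+1), Fb_succ k (n+1), Fa_succ (k+1) n, Fb_succ k n]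
  ring

lemma C_one (k : ℕ) : Fa k 1 * Fb k 1 = (1+2^k)^2 * (1+2^(k+1)) := by
  rw [Fa_succ, Fb_succ, Fa_zero, Fb_zero]
  ring

lemma C_even : ∀ m, 1 ≤ m → ∀ k, Fa k (2*m) * Fb k (2*m) =
    (1+2^k)^(2^(2*m-1)) * (1+2^(k+m))^3 *
      ∏ i ∈ Finset.Icc 1 (m-1), (1+2^(k+i))^(3*2^(2*m-2*i-1)) := by
  refine Nat.le_induction ?_ ?_
  · intro k
    rw [show 2*1 = 0+2 from rfl, C_rec, Fa_zero, Fb_zero]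
    rw [show (1:ℕ)-1 = 0 from rfl, Finset.Icc_eq_empty (by omega), Finset.prod_empty]
    norm_num
    ring
  · intro m hm IH k
    rw [show 2*(m+1) = 2*m+2 from by ring, C_rec, IH (k+1)]
    rw [show m+1-1 = m from rfl]
    rw [prod_split m hm (fun i => (1+2^(k+i))^(3*2^(2*m+2-2*i-1)))]
    rw [← prod_shift m hm (fun i => (1+2^(k+i))^(3*2^(2*m+2-2*i-1)))]
    have hprod : (∏ i ∈ Finset.Icc 1 (m-1),
        (1+2^(k+(i+1)))^(3*2^(2*m+2-2*(i+1)-1))) =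
        ∏ i ∈ Finset.Icc 1 (m-1), (1+2^(k+1+i))^(3*2^(2*m-2*i-1)) := by
      refine Finset.prod_congr rfl fun i _ => ?_
      rw [show k+(i+1) = k+1+i from by ring, show 2*m+2-2*(i+1)-1 = 2*m-2*i-1 from by omega]
    rw [hprod]
    rw [show 2*m+2-1 = 2*m+1 from by omega, show k+(m+1) = k+1+m from by ring,
      show 2*m+2-2*1-1 = 2*m-1 from by omega]
    have h2 : (3:ℕ)*2^(2*m-1) = 2^(2*m) + 2^(2*m-1) := by
      have : (2:ℕ)^(2*m) = 2*2^(2*m-1) := by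
        conv_lhs => rw [show 2*m = (2*m-1)+1 from by omega]
        rw [pow_succ']
      omega
    rw [h2, pow_add]
    ring

lemma C_odd : ∀ m, 1 ≤ m → ∀ k, Fa k (2*m+1) * Fb k (2*m+1) =
    (1+2^k)^(2^(2*m)) * (1+2^(k+m))^4 * (1+2^(k+m+1)) *
      ∏ i ∈ Finset.Icc 1 (m-1), (1+2^(k+i))^(3*2^(2*m-2*i)) := by
  refine Nat.le_induction ?_ ?_
  · intro k
    rw [show 2*1+1 = 1+2 from rfl, C_rec, C_one]
    rw [show (1:ℕ)-1 = 0 from rfl, Finset.Icc_eq_empty (by omega), Finset.prod_empty]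
    norm_num
    ring
  · intro m hm IH k
    rw [show 2*(m+1)+1 = (2*m+1)+2 from by ring, C_rec, IH (k+1)]
    rw [show m+1-1 = m from rfl]
    rw [prod_split m hm (fun i => (1+2^(k+i))^(3*2^(2*(m+1)-2*i)))]
    rw [← prod_shift m hm (fun i => (1+2^(k+i))^(3*2^(2*(m+1)-2*i)))]
    have hprod : (∏ i ∈ Finset.Icc 1 (m-1),
        (1+2^(k+(i+1)))^(3*2^(2*(m+1)-2*(i+1)))) =
        ∏ i ∈ Finset.Icc 1 (m-1), (1+2^(k+1+i))^(3*2^(2*m-2*i)) := by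
      refine Finset.prod_congr rfl fun i _ => ?_
      rw [show k+(i+1) = k+1+i from by ring, show 2*(m+1)-2*(i+1) = 2*m-2*i from by omega]
    rw [hprod]
    rw [show 2*(m+1)-2*1 = 2*m from by omega, show 2*(m+1) = 2*m+1+1 from by ring,
      show k+(m+1) = k+1+m from by ring]
    have h2 : (3:ℕ)*2^(2*m) = 2^(2*m+1) + 2^(2*m) := by
      have : (2:ℕ)^(2*m+1) = 2*2^(2*m) := by rw [pow_succ']
      omega
    rw [h2, pow_add]
    ring

end Arith
/-- The number of connected spanning subgraphs of the level-`n`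
Schreier graph `B_n` of the Basilica group: for `n ≥ 4` odd it is
`2^(2^(n-1)) (1 + 2^((n-1)/2))^4 (1 + 2^((n+1)/2))
  ∏_{i=1}^{(n-1)/2-1} (1 + 2^i)^(3·2^(n-2i-1))`;
for `n ≥ 4` even it is
`2^(2^(n-1)) (1 + 2^(n/2))^3 ∏_{i=1}^{n/2-1} (1 + 2^i)^(3·2^(n-2i-1))`.
Moreover, the counts for `n = 1, 2, 3` are `2²·3`, `2²·3³` and `2⁴·3⁴·5`. -/
theorem connCount_basilica :
    (∀ n : ℕ, 4 ≤ n → Odd n →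
      (basilica n).connCount =
        2 ^ (2 ^ (n - 1)) * (1 + 2 ^ ((n - 1) / 2)) ^ 4 * (1 + 2 ^ ((n + 1) / 2)) *
          ∏ i ∈ Finset.Icc 1 ((n - 1) / 2 - 1),
            (1 + 2 ^ i) ^ (3 * 2 ^ (n - 2 * i - 1))) ∧
    (∀ n : ℕ, 4 ≤ n → Even n →
      (basilica n).connCount =
        2 ^ (2 ^ (n - 1)) * (1 + 2 ^ (n / 2)) ^ 3 *
          ∏ i ∈ Finset.Icc 1 (n / 2 - 1),
            (1 + 2 ^ i) ^ (3 * 2 ^ (n - 2 * i - 1))) ∧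
    (basilica 1).connCount = 2 ^ 2 * 3 ∧
    (basilica 2).connCount = 2 ^ 2 * 3 ^ 3 ∧
    (basilica 3).connCount = 2 ^ 4 * 3 ^ 4 * 5 := by
  refine ⟨?_, ?_, ?_, ?_, ?_⟩
  · -- odd case
    intro n h4 hodd
    have hmod : n % 2 = 1 := Nat.odd_iff.mp hodd
    obtain ⟨c, rfl⟩ : ∃ c, n = 2*c+1 := ⟨n/2, by omega⟩
    rw [connCount_eq_F, C_odd c (by omega) 0]
    have hp : (∏ i ∈ Finset.Icc 1 (c-1), (1+2^(0+i))^(3*2^(2*c-2*i))) =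
        ∏ i ∈ Finset.Icc 1 (c-1), (1+2^i)^(3*2^(2*c+1-2*i-1)) := by
      refine Finset.prod_congr rfl fun i _ => ?_
      rw [show 0+i = i from by omega, show 2*c-2*i = 2*c+1-2*i-1 from by omega]
    rw [hp]
    rw [show (2*c+1-1)/2 = c from by omega, show (2*c+1+1)/2 = c+1 from by omega,
      show 2*c+1-1 = 2*c from by omega]
    norm_num
  · -- even case
    intro n h4 heven
    have hmod : n % 2 = 0 := Nat.even_iff.mp heven
    obtain ⟨c, rfl⟩ : ∃ c, n = 2*c := ⟨n/2, by omega⟩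
    rw [connCount_eq_F, C_even c (by omega) 0]
    have hp : (∏ i ∈ Finset.Icc 1 (c-1), (1+2^(0+i))^(3*2^(2*c-2*i-1))) =
        ∏ i ∈ Finset.Icc 1 (c-1), (1+2^i)^(3*2^(2*c-2*i-1)) := by
      refine Finset.prod_congr rfl fun i _ => ?_
      rw [show 0+i = i from by omega]
    rw [hp]
    rw [show (2*c)/2 = c from by omega]
    norm_num
  · rw [connCount_eq_F, C_one 0]
    norm_num
  · rw [connCount_eq_F]
    conv_lhs => rw [show (2:ℕ) = 0+2 from rfl]
    rw [C_rec, Fa_zero, Fb_zero]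
    norm_num
  · rw [connCount_eq_F]
    conv_lhs => rw [show (3:ℕ) = 1+2 from rfl]
    rw [C_rec, C_one]
    norm_num
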